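/- Let 𝓛 be an even mixed form of codegree k and additional degree r on an open set U ⊆ ℝⁿ, and let Δ𝓛 be its differential, Δ𝓛(x, p, ŵ) := (−1)^r Σ_{K=1}^{k} Σ_{A=1}^{n} w'^K (∂²𝓛/∂x^A∂p_A^K)(x, p, w), where ŵ ∈ Matrix((r+1)×k, ℝ) has first r rows w and last row w'. Then Δ𝓛 is right-covariant: Δ𝓛(x, p·g, ŵ·g) = det g · Δ𝓛(x, p, ŵ) for all x, p, ŵ and all invertible g ∈ Matrix(k×k, ℝ). -/

import Mathlib

open MeasureTheory
open scoped BigOperators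

noncomputable section

/-- Product of matrices given as functions (entry `(i,k)` is `∑ j, M i j * N j k`). -/
def mmul {a b c : ℕ} (M : Fin a → Fin b → ℝ) (N : Fin b → Fin c → ℝ) :
    Fin a → Fin c → ℝ :=
  fun i k => ∑ j, M i j * N j k

/-- Determinant of a square matrix given as a function. -/
def fdet {a : ℕ} (M : Fin a → Fin a → ℝ) : ℝ :=
  Matrix.det (Matrix.of M)

/-- Partial derivative of a function of a matrix with respect to the `(i,j)` entry. -/
def pdM {a b : ℕ} (L : (Fin a → Fin b → ℝ) → ℝ) (i : Fin a) (j : Fin b)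
    (m : Fin a → Fin b → ℝ) : ℝ :=
  deriv (fun t : ℝ => L (fun i' j' => m i' j' + (if i' = i ∧ j' = j then t else 0))) 0

/-- Partial derivative of a function of a vector with respect to the `i`-th coordinate. -/
def pdV {a : ℕ} (f : (Fin a → ℝ) → ℝ) (i : Fin a) (x : Fin a → ℝ) : ℝ :=
  deriv (fun t : ℝ => f (fun i' => x i' + (if i' = i then t else 0))) 0

/-- The fundamental equations for a function of an `a × b` matrix:
for all rows `i₁, i₂` and columns `j₁, j₂`,
`∂²L/∂m_{i₁}^{j₁}∂m_{i₂}^{j₂} + ∂²L/∂m_{i₂}^{j₁}∂m_{i₁}^{j₂} = 0`. -/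
def FundEqs {a b : ℕ} (L : (Fin a → Fin b → ℝ) → ℝ) : Prop :=
  ∀ (i₁ i₂ : Fin a) (j₁ j₂ : Fin b) (m : Fin a → Fin b → ℝ),
    pdM (fun m' => pdM L i₂ j₂ m') i₁ j₁ m + pdM (fun m' => pdM L i₁ j₂ m') i₂ j₁ m = 0

/-- The velocity matrix of a path `γ`: `(vel γ t) F A = ∂γ^A/∂t^F (t)`. -/
def vel {r n : ℕ} (γ : (Fin r → ℝ) → (Fin n → ℝ)) (t : Fin r → ℝ) :
    Fin r → Fin n → ℝ :=
  fun F A => pdV (fun s => γ s A) F t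

/-- The matrix of gradients of a copath `f`: `(grad f x) A K = ∂f^K/∂x^A (x)`. -/
def grad {n k : ℕ} (f : (Fin n → ℝ) → (Fin k → ℝ)) (x : Fin n → ℝ) :
    Fin n → Fin k → ℝ :=
  fun A K => pdV (fun y => f y K) A x

/-- An even `r`-form on an open set `U ⊆ ℝⁿ`: a smooth function `L(x, ẋ)` of a point
`x` and an `r × n` matrix `ẋ` which is covariant (`L(x, h·ẋ) = det h · L(x, ẋ)` for
invertible `h`) and satisfies the fundamental equations in the entries of `ẋ`. -/
def IsEvenForm {n r : ℕ} (U : Set (Fin n → ℝ))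
    (L : (Fin n → ℝ) → (Fin r → Fin n → ℝ) → ℝ) : Prop :=
  ContDiffOn ℝ (⊤ : ℕ∞)
      (fun q : (Fin n → ℝ) × (Fin r → Fin n → ℝ) => L q.1 q.2)
      (U ×ˢ (Set.univ : Set (Fin r → Fin n → ℝ))) ∧
  (∀ x ∈ U, ∀ (xdot : Fin r → Fin n → ℝ) (h : Fin r → Fin r → ℝ), fdet h ≠ 0 →
    L x (mmul h xdot) = fdet h * L x xdot) ∧
  (∀ x ∈ U, FundEqs (L x))

/-- The differential of a Lagrangian of paths `L(x, ẋ)`: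
`ΔL(x, (ẋ; ẏ)) = (−1)^r Σ_A ẏ^A (∂L/∂x^A − Σ_{F,B} ẋ_F^B ∂²L/∂x^B∂ẋ_F^A)`,
where `ẋ` consists of the first `r` rows and `ẏ` is the last row of the argument. -/
def Dform {n r : ℕ} (L : (Fin n → ℝ) → (Fin r → Fin n → ℝ) → ℝ) :
    (Fin n → ℝ) → (Fin (r + 1) → Fin n → ℝ) → ℝ :=
  fun x M => (-1 : ℝ) ^ r * ∑ A, M (Fin.last r) A *
    (pdV (fun x' => L x' (fun F => M (Fin.castSucc F))) A x
      - ∑ F, ∑ B, M (Fin.castSucc F) B *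
          pdV (fun x' => pdM (L x') F A (fun G => M (Fin.castSucc G))) B x)

/-- An even mixed form of codegree `k` and additional degree `r` on an open set
`U ⊆ ℝⁿ`: a smooth function `𝓛(x, p, w)` which is right-covariant, left-covariant,
admissible, and satisfies the fundamental equations in the entries of the stacked
`(n+r) × k` matrix (`p` over `w`). -/
def IsMixedForm {n k r : ℕ} (U : Set (Fin n → ℝ))
    (L : (Fin n → ℝ) → (Fin n → Fin k → ℝ) → (Fin r → Fin k → ℝ) → ℝ) : Prop :=
  ContDiffOn ℝ (⊤ : ℕ∞)
      (fun q : (Fin n → ℝ) × (Fin n → Fin k → ℝ) × (Fin r → Fin k → ℝ) =>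
        L q.1 q.2.1 q.2.2)
      (U ×ˢ (Set.univ : Set ((Fin n → Fin k → ℝ) × (Fin r → Fin k → ℝ)))) ∧
  (∀ x ∈ U, ∀ (p : Fin n → Fin k → ℝ) (w : Fin r → Fin k → ℝ) (g : Fin k → Fin k → ℝ),
    fdet g ≠ 0 → L x (mmul p g) (mmul w g) = fdet g * L x p w) ∧
  (∀ x ∈ U, ∀ (p : Fin n → Fin k → ℝ) (w : Fin r → Fin k → ℝ) (h : Fin r → Fin r → ℝ),
    fdet h ≠ 0 → L x p (mmul h w) = fdet h * L x p w) ∧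
  (∀ x ∈ U, ∀ (p : Fin n → Fin k → ℝ) (w : Fin r → Fin k → ℝ) (a : Fin n → Fin r → ℝ),
    L x (p + mmul a w) w = L x p w) ∧
  (∀ x ∈ U, FundEqs (fun m : Fin (n + r) → Fin k → ℝ =>
    L x (fun A => m (Fin.castAdd r A)) (fun F => m (Fin.natAdd n F))))

/-- The differential of a mixed Lagrangian `𝓛(x, p, w)`:
`Δ𝓛(x, p, ŵ) = (−1)^r Σ_{K,A} w'^K ∂²𝓛/∂x^A∂p_A^K (x, p, w)`, where `ŵ` has first
`r` rows `w` and last row `w'`. -/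
def Dmix {n k r : ℕ}
    (L : (Fin n → ℝ) → (Fin n → Fin k → ℝ) → (Fin r → Fin k → ℝ) → ℝ) :
    (Fin n → ℝ) → (Fin n → Fin k → ℝ) → (Fin (r + 1) → Fin k → ℝ) → ℝ :=
  fun x p what => (-1 : ℝ) ^ r * ∑ K, ∑ A, what (Fin.last r) K *
    pdV (fun x' => pdM (fun p' => L x' p' (fun F => what (Fin.castSucc F))) A K p) A x

/-- An even dual form of codegree `k` on an open set `U ⊆ ℝⁿ`: a smooth function
`𝓛(x, p)` of a point `x` and an `n × k` matrix `p` of momenta which is covariant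
(`𝓛(x, p·g) = det g · 𝓛(x, p)` for invertible `g`) and satisfies the fundamental
equations in the entries of `p`. -/
def IsDualForm {n k : ℕ} (U : Set (Fin n → ℝ))
    (L : (Fin n → ℝ) → (Fin n → Fin k → ℝ) → ℝ) : Prop :=
  ContDiffOn ℝ (⊤ : ℕ∞)
      (fun q : (Fin n → ℝ) × (Fin n → Fin k → ℝ) => L q.1 q.2)
      (U ×ˢ (Set.univ : Set (Fin n → Fin k → ℝ))) ∧
  (∀ x ∈ U, ∀ (p : Fin n → Fin k → ℝ) (g : Fin k → Fin k → ℝ), fdet g ≠ 0 →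
    L x (mmul p g) = fdet g * L x p) ∧
  (∀ x ∈ U, FundEqs (L x))

/-- The identity matrix as a function. -/
def idm (n : ℕ) : Fin n → Fin n → ℝ := fun i j => if i = j then 1 else 0

/-! ### Auxiliary definitions and lemmas -/

/-- The matrix with a single `1` entry at `(i,j)`. -/
def Emat {a b : ℕ} (i : Fin a) (j : Fin b) : Fin a → Fin b → ℝ :=
  fun i' j' => if i' = i ∧ j' = j then 1 else 0

/-- The `i`-th standard basis vector. -/
def evec {a : ℕ} (i : Fin a) : Fin a → ℝ := fun i' => if i' = i then 1 else 0

lemma pdM_eq {a b : ℕ} (L : (Fin a → Fin b → ℝ) → ℝ) (i : Fin a) (j : Fin b)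
    (m : Fin a → Fin b → ℝ) :
    pdM L i j m = deriv (fun t : ℝ => L (m + t • Emat i j)) 0 := by
  unfold pdM
  congr 1
  funext t
  congr 1
  funext i' j'
  simp only [Pi.add_apply, Pi.smul_apply, Emat, smul_eq_mul]
  split_ifs <;> ring

lemma pdV_eq {a : ℕ} (f : (Fin a → ℝ) → ℝ) (i : Fin a) (x : Fin a → ℝ) :
    pdV f i x = deriv (fun t : ℝ => f (x + t • evec i)) 0 := by
  unfold pdV
  congr 1
  funext t
  congr 1
  funext i'
  simp only [Pi.add_apply, Pi.smul_apply, evec, smul_eq_mul]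
  split_ifs <;> ring

lemma hasDerivAt_line {E : Type*} [NormedAddCommGroup E] [NormedSpace ℝ E]
    (m v : E) (t : ℝ) : HasDerivAt (fun s : ℝ => m + s • v) v t := by
  simpa using ((hasDerivAt_id t).smul_const v).const_add m

lemma pdM_fderiv {a b : ℕ} {L : (Fin a → Fin b → ℝ) → ℝ} (i : Fin a) (j : Fin b)
    {m : Fin a → Fin b → ℝ} (hL : DifferentiableAt ℝ L m) :
    pdM L i j m = fderiv ℝ L m (Emat i j) := by
  rw [pdM_eq]
  have h0 : m + (0:ℝ) • Emat i j = m := by simp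
  have hf : HasFDerivAt L (fderiv ℝ L m) ((fun s : ℝ => m + s • Emat i j) 0) := by
    simpa [h0] using hL.hasFDerivAt
  exact (hf.comp_hasDerivAt 0 (hasDerivAt_line m (Emat i j) 0)).deriv

lemma line_tendsto {a : ℕ} (x : Fin a → ℝ) (i : Fin a) :
    Filter.Tendsto (fun t : ℝ => x + t • evec i) (nhds 0) (nhds x) := by
  have hc : Continuous (fun t : ℝ => x + t • evec i) := by continuity
  have := hc.continuousAt (x := (0:ℝ))
  unfold ContinuousAt at this
  simpa using this

lemma pdV_congr {a : ℕ} {f g : (Fin a → ℝ) → ℝ} (i : Fin a) {x : Fin a → ℝ}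
    (h : f =ᶠ[nhds x] g) : pdV f i x = pdV g i x := by
  rw [pdV_eq, pdV_eq]
  exact Filter.EventuallyEq.deriv_eq (h.comp_tendsto (line_tendsto x i))

lemma mmul_assoc {a b c d : ℕ} (M : Fin a → Fin b → ℝ) (N : Fin b → Fin c → ℝ)
    (P : Fin c → Fin d → ℝ) : mmul (mmul M N) P = mmul M (mmul N P) := by
  funext i l
  simp only [mmul, Finset.sum_mul, Finset.mul_sum]
  rw [Finset.sum_comm]
  simp [mul_assoc]

lemma mmul_idm {a b : ℕ} (M : Fin a → Fin b → ℝ) : mmul M (idm b) = M := by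
  funext i l
  simp [mmul, idm, mul_ite]

lemma mmul_add_left {a b c : ℕ} (M N : Fin a → Fin b → ℝ) (P : Fin b → Fin c → ℝ) :
    mmul (M + N) P = mmul M P + mmul N P := by
  funext i l
  simp [mmul, add_mul, Finset.sum_add_distrib]

lemma mmul_smul_left {a b c : ℕ} (t : ℝ) (M : Fin a → Fin b → ℝ) (P : Fin b → Fin c → ℝ) :
    mmul (t • M) P = t • mmul M P := by
  funext i l
  simp [mmul, Finset.mul_sum, mul_assoc]

lemma mmul_Emat {a b c : ℕ} (i : Fin a) (j : Fin b) (P : Fin b → Fin c → ℝ) :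
    mmul (Emat i j) P = ∑ M, P j M • Emat i M := by
  funext i' l
  simp only [mmul, Emat, Finset.sum_apply, Pi.smul_apply, smul_eq_mul, ite_mul, one_mul,
    zero_mul, mul_ite, mul_one, mul_zero]
  by_cases h : i' = i
  · subst h
    simp
  · simp [h]

/-- Collapsing a `g`/`g⁻¹` pair inside a quadruple sum. -/
lemma mixed_sum_collapse {k n : ℕ} (wl : Fin k → ℝ) (g h : Fin k → Fin k → ℝ) (c : ℝ)
    (D : Fin n → Fin k → ℝ)
    (hgh : ∀ J M : Fin k, (∑ K, g J K * h K M) = if J = M then 1 else 0) :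
    ∑ K, ∑ A, (∑ J, wl J * g J K) * (c * ∑ M, h K M * D A M)
      = c * ∑ K, ∑ A, wl K * D A K := by
  have key : ∀ A : Fin n, (∑ K, (∑ J, wl J * g J K) * (c * ∑ M, h K M * D A M))
      = c * ∑ K, wl K * D A K := by
    intro A
    calc ∑ K, (∑ J, wl J * g J K) * (c * ∑ M, h K M * D A M)
        = ∑ K, ∑ J, ∑ M, (wl J * c * D A M) * (g J K * h K M) := by
          refine Finset.sum_congr rfl fun K _ => ?_
          rw [Finset.mul_sum, Finset.sum_mul_sum]
          exact Finset.sum_congr rfl fun J _ => Finset.sum_congr rfl fun M _ => by ring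
      _ = ∑ J, ∑ K, ∑ M, (wl J * c * D A M) * (g J K * h K M) := Finset.sum_comm
      _ = ∑ J, ∑ M, ∑ K, (wl J * c * D A M) * (g J K * h K M) :=
          Finset.sum_congr rfl fun J _ => Finset.sum_comm
      _ = ∑ J, ∑ M, (wl J * c * D A M) * ∑ K, g J K * h K M :=
          Finset.sum_congr rfl fun J _ => Finset.sum_congr rfl fun M _ =>
            (Finset.mul_sum _ _ _).symm
      _ = ∑ J, ∑ M, (wl J * c * D A M) * (if J = M then 1 else 0) := by
          simp only [hgh]
      _ = ∑ J, wl J * c * D A J := by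
          simp [mul_ite, Finset.sum_ite_eq]
      _ = c * ∑ K, wl K * D A K := by
          rw [Finset.mul_sum]
          exact Finset.sum_congr rfl fun J _ => by ring
  calc ∑ K, ∑ A, (∑ J, wl J * g J K) * (c * ∑ M, h K M * D A M)
      = ∑ A, ∑ K, (∑ J, wl J * g J K) * (c * ∑ M, h K M * D A M) := Finset.sum_comm
    _ = ∑ A, c * ∑ K, wl K * D A K := Finset.sum_congr rfl fun A _ => key A
    _ = c * ∑ A, ∑ K, wl K * D A K := (Finset.mul_sum _ _ _).symm
    _ = c * ∑ K, ∑ A, wl K * D A K := congrArg (fun z => c * z) Finset.sum_comm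
/-- The differential `Δ𝓛` of an even mixed form `𝓛` of codegree
`k` and additional degree `r` on `U` is right-covariant:
`Δ𝓛(x, p·g, ŵ·g) = det g · Δ𝓛(x, p, ŵ)` for all invertible `g`. -/
theorem statement_12 (n k r : ℕ) (U : Set (Fin n → ℝ)) (hU : IsOpen U)
    (L : (Fin n → ℝ) → (Fin n → Fin k → ℝ) → (Fin r → Fin k → ℝ) → ℝ)
    (hL : IsMixedForm U L) :
    ∀ x ∈ U, ∀ (p : Fin n → Fin k → ℝ) (what : Fin (r + 1) → Fin k → ℝ)
        (g : Fin k → Fin k → ℝ), fdet g ≠ 0 →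
      Dmix L x (mmul p g) (mmul what g) = fdet g * Dmix L x p what := by
  obtain ⟨hsm, hcov, -, -, -⟩ := hL
  intro x hx p what g hg
  classical
  set w : Fin r → Fin k → ℝ := fun F => what (Fin.castSucc F) with hwdef
  -- the inverse of `g`
  have hunit : IsUnit (Matrix.of g).det := isUnit_iff_ne_zero.mpr hg
  set h : Fin k → Fin k → ℝ := fun i j => (Matrix.of g)⁻¹ i j with hhdef
  have hgh : mmul g h = idm k := by
    funext i j
    have h1 := Matrix.mul_nonsing_inv (Matrix.of g) hunit
    have h2 : (Matrix.of g * (Matrix.of g)⁻¹) i j = (1 : Matrix (Fin k) (Fin k) ℝ) i j := by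
      rw [h1]
    simpa [mmul, idm, Matrix.mul_apply, Matrix.one_apply, hhdef] using h2
  have hhg : mmul h g = idm k := by
    funext i j
    have h1 := Matrix.nonsing_inv_mul (Matrix.of g) hunit
    have h2 : ((Matrix.of g)⁻¹ * Matrix.of g) i j = (1 : Matrix (Fin k) (Fin k) ℝ) i j := by
      rw [h1]
    simpa [mmul, idm, Matrix.mul_apply, Matrix.one_apply, hhdef] using h2
  -- smoothness bookkeeping
  set s : Set ((Fin n → ℝ) × (Fin n → Fin k → ℝ) × (Fin r → Fin k → ℝ)) :=
    U ×ˢ (Set.univ : Set ((Fin n → Fin k → ℝ) × (Fin r → Fin k → ℝ))) with hsdef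
  have hsopen : IsOpen s := hU.prod isOpen_univ
  set Fj : ((Fin n → ℝ) × (Fin n → Fin k → ℝ) × (Fin r → Fin k → ℝ)) → ℝ :=
    fun q => L q.1 q.2.1 q.2.2 with hFjdef
  have hFdiff : ∀ x' ∈ U, ∀ (q : Fin n → Fin k → ℝ) (w0 : Fin r → Fin k → ℝ),
      DifferentiableAt ℝ Fj (x', (q, w0)) := fun x' hx' q w0 =>
    (hsm.contDiffAt (hsopen.mem_nhds ⟨hx', trivial⟩)).differentiableAt
      (by simp)
  have hdiffp : ∀ x' ∈ U, ∀ (q : Fin n → Fin k → ℝ) (w0 : Fin r → Fin k → ℝ),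
      DifferentiableAt ℝ (fun p' => L x' p' w0) q := by
    intro x' hx' q w0
    have hj : DifferentiableAt ℝ
        (fun p' : Fin n → Fin k → ℝ => ((x', (p', w0)) :
          (Fin n → ℝ) × (Fin n → Fin k → ℝ) × (Fin r → Fin k → ℝ))) q :=
      (differentiableAt_const _).prodMk (differentiableAt_id.prodMk (differentiableAt_const _))
    exact (hFdiff x' hx' q w0).comp q hj
  -- the inner (momentum) chain rule
  have hinner : ∀ x' ∈ U, ∀ (A : Fin n) (K : Fin k),
      pdM (fun p' => L x' p' (mmul w g)) A K (mmul p g)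
        = fdet g * ∑ M, h K M * pdM (fun p' => L x' p' w) A M p := by
    intro x' hx' A K
    have hR : ∀ t : ℝ, mmul p g + t • Emat A K = mmul (p + t • mmul (Emat A K) h) g := by
      intro t
      rw [mmul_add_left, mmul_smul_left, mmul_assoc, hhg, mmul_idm]
    rw [pdM_eq]
    have heq : (fun t : ℝ => L x' (mmul p g + t • Emat A K) (mmul w g))
        = fun t : ℝ => fdet g * L x' (p + t • mmul (Emat A K) h) w := by
      funext t
      rw [hR t, hcov x' hx' _ w g hg]
    rw [heq, deriv_const_mul_field]
    have hdp := hdiffp x' hx' p w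
    have hF' : HasFDerivAt (fun q => L x' q w) (fderiv ℝ (fun q => L x' q w) p)
        ((fun t : ℝ => p + t • mmul (Emat A K) h) 0) := by
      simpa using hdp.hasFDerivAt
    have hd : deriv (fun t : ℝ => L x' (p + t • mmul (Emat A K) h) w) 0
        = fderiv ℝ (fun q => L x' q w) p (mmul (Emat A K) h) :=
      by have := (hF'.comp_hasDerivAt 0 (hasDerivAt_line p (mmul (Emat A K) h) 0)).deriv; exact this
    rw [hd, mmul_Emat, map_sum]
    congr 1
    refine Finset.sum_congr rfl fun M _ => ?_
    rw [pdM_fderiv A M hdp, ContinuousLinearMap.map_smul, smul_eq_mul]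
  -- differentiability of the momentum partials in the point variable
  have hfd1 : DifferentiableOn ℝ (fderiv ℝ Fj) s :=
    (hsm.fderiv_of_isOpen (m := 1) hsopen (WithTop.coe_le_coe.mpr le_top)).differentiableOn one_ne_zero
  have hPhidiff : ∀ v : (Fin n → ℝ) × (Fin n → Fin k → ℝ) × (Fin r → Fin k → ℝ),
      DifferentiableAt ℝ (fun x' => fderiv ℝ Fj (x', (p, w)) v) x := by
    intro v
    have hj : DifferentiableAt ℝ (fun x' : Fin n → ℝ => ((x', (p, w)) :
        (Fin n → ℝ) × (Fin n → Fin k → ℝ) × (Fin r → Fin k → ℝ))) x :=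
      differentiableAt_id.prodMk (differentiableAt_const _)
    have h1 : DifferentiableAt ℝ (fderiv ℝ Fj) (x, (p, w)) :=
      hfd1.differentiableAt (hsopen.mem_nhds ⟨hx, trivial⟩)
    exact (h1.comp x hj).clm_apply (differentiableAt_const v)
  have hHeq : ∀ (A : Fin n) (M : Fin k), ∀ x' ∈ U,
      pdM (fun p' => L x' p' w) A M p
        = fderiv ℝ Fj (x', (p, w)) (0, (Emat A M, 0)) := by
    intro A M x' hx'
    rw [pdM_fderiv A M (hdiffp x' hx' p w)]
    have hj : HasFDerivAt (fun p' : Fin n → Fin k → ℝ => ((x', (p', w)) :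
        (Fin n → ℝ) × (Fin n → Fin k → ℝ) × (Fin r → Fin k → ℝ)))
        ((0 : (Fin n → Fin k → ℝ) →L[ℝ] (Fin n → ℝ)).prod
          ((ContinuousLinearMap.id ℝ (Fin n → Fin k → ℝ)).prod 0)) p :=
      (hasFDerivAt_const _ _).prodMk ((hasFDerivAt_id _).prodMk (hasFDerivAt_const _ _))
    have hcomp : HasFDerivAt (fun p' => L x' p' w)
        ((fderiv ℝ Fj (x', (p, w))).comp
          ((0 : (Fin n → Fin k → ℝ) →L[ℝ] (Fin n → ℝ)).prod
            ((ContinuousLinearMap.id ℝ (Fin n → Fin k → ℝ)).prod 0))) p :=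
      by have := (hFdiff x' hx' p w).hasFDerivAt.comp p hj; exact this
    rw [hcomp.fderiv]
    simp
  have hU_nhds : U ∈ nhds x := hU.mem_nhds hx
  have hHline : ∀ (A : Fin n) (M : Fin k), HasDerivAt
      (fun t : ℝ => pdM (fun p' => L (x + t • evec A) p' w) A M p)
      (pdV (fun x' => pdM (fun p' => L x' p' w) A M p) A x) 0 := by
    intro A M
    have heqv : (fun x' => pdM (fun p' => L x' p' w) A M p)
        =ᶠ[nhds x] (fun x' => fderiv ℝ Fj (x', (p, w)) (0, (Emat A M, 0))) :=
      Filter.eventually_of_mem hU_nhds (fun x' hx' => hHeq A M x' hx')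
    have hlineEq := heqv.comp_tendsto (line_tendsto x A)
    have hΦ : DifferentiableAt ℝ
        (fun x' => fderiv ℝ Fj (x', (p, w)) (0, (Emat A M, 0)))
        ((fun t : ℝ => x + t • evec A) 0) := by
      simpa using hPhidiff (0, (Emat A M, 0))
    have hdiff2 : DifferentiableAt ℝ
        ((fun x' => fderiv ℝ Fj (x', (p, w)) (0, (Emat A M, 0))) ∘
          (fun t : ℝ => x + t • evec A)) 0 :=
      hΦ.comp 0 (hasDerivAt_line x (evec A) 0).differentiableAt
    have hdiff1 : DifferentiableAt ℝ
        (fun t : ℝ => pdM (fun p' => L (x + t • evec A) p' w) A M p) 0 :=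
      (hlineEq.differentiableAt_iff).mpr hdiff2
    have h3 : pdV (fun x' => pdM (fun p' => L x' p' w) A M p) A x
        = deriv (fun t : ℝ => pdM (fun p' => L (x + t • evec A) p' w) A M p) 0 :=
      pdV_eq _ _ _
    rw [h3]
    exact hdiff1.hasDerivAt
  -- the outer (point) derivative computation
  have houter : ∀ (A : Fin n) (K : Fin k),
      pdV (fun x' => pdM (fun p' => L x' p' (mmul w g)) A K (mmul p g)) A x
        = fdet g * ∑ M, h K M *
            pdV (fun x' => pdM (fun p' => L x' p' w) A M p) A x := by
    intro A K
    have h1 : pdV (fun x' => pdM (fun p' => L x' p' (mmul w g)) A K (mmul p g)) A x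
        = pdV (fun x' => fdet g * ∑ M, h K M * pdM (fun p' => L x' p' w) A M p) A x :=
      pdV_congr A (Filter.eventually_of_mem hU_nhds fun x' hx' => hinner x' hx' A K)
    have h2 : pdV (fun x' => fdet g * ∑ M, h K M * pdM (fun p' => L x' p' w) A M p) A x
        = deriv (fun t : ℝ => fdet g * ∑ M, h K M *
            pdM (fun p' => L (x + t • evec A) p' w) A M p) 0 :=
      pdV_eq _ _ _
    rw [h1, h2, deriv_const_mul_field]
    congr 1
    have hsum : HasDerivAt (fun t : ℝ => ∑ M, h K M *
        pdM (fun p' => L (x + t • evec A) p' w) A M p)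
        (∑ M, h K M * pdV (fun x' => pdM (fun p' => L x' p' w) A M p) A x) 0 :=
      HasDerivAt.fun_sum fun M _ => (hHline A M).const_mul (h K M)
    exact hsum.deriv
  -- assemble
  show (-1 : ℝ) ^ r * ∑ K, ∑ A, mmul what g (Fin.last r) K *
      pdV (fun x' => pdM (fun p' => L x' p' (mmul w g)) A K (mmul p g)) A x
    = fdet g * ((-1 : ℝ) ^ r * ∑ K, ∑ A, what (Fin.last r) K *
      pdV (fun x' => pdM (fun p' => L x' p' w) A K p) A x)
  have hL1 : ∀ (K : Fin k) (A : Fin n), mmul what g (Fin.last r) K *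
        pdV (fun x' => pdM (fun p' => L x' p' (mmul w g)) A K (mmul p g)) A x
      = (∑ J, what (Fin.last r) J * g J K) * (fdet g * ∑ M, h K M *
          pdV (fun x' => pdM (fun p' => L x' p' w) A M p) A x) := by
    intro K A
    rw [houter A K]
    rfl
  calc (-1 : ℝ) ^ r * ∑ K, ∑ A, mmul what g (Fin.last r) K *
      pdV (fun x' => pdM (fun p' => L x' p' (mmul w g)) A K (mmul p g)) A x
      = (-1 : ℝ) ^ r * ∑ K, ∑ A, (∑ J, what (Fin.last r) J * g J K) *
          (fdet g * ∑ M, h K M *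
            pdV (fun x' => pdM (fun p' => L x' p' w) A M p) A x) := by
        congr 1
        exact Finset.sum_congr rfl fun K _ => Finset.sum_congr rfl fun A _ => hL1 K A
    _ = (-1 : ℝ) ^ r * (fdet g * ∑ K, ∑ A, what (Fin.last r) K *
          pdV (fun x' => pdM (fun p' => L x' p' w) A K p) A x) := by
        rw [mixed_sum_collapse (what (Fin.last r)) g h (fdet g)
          (fun A K => pdV (fun x' => pdM (fun p' => L x' p' w) A K p) A x)
          (fun J M => by
            have := congrFun (congrFun hgh J) M
            simpa [mmul, idm] using this)]
    _ = fdet g * ((-1 : ℝ) ^ r * ∑ K, ∑ A, what (Fin.last r) K *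
          pdV (fun x' => pdM (fun p' => L x' p' w) A K p) A x) := by ring
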